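/- There exists a connected graph G with a list-assignment L in which one vertex w has |L(w)| = deg(w) and all other vertices v have |L(v)| ≥ deg(v)+1, such that the reconfiguration graph of proper L-colourings has at least n! components each of which is not a singleton, where n+1 = |V(G)|. Concretely: take K_n with all lists {1,…,n}, add a pendant vertex x attached to one vertex of K_n with list {n+1, n+2}; then the reconfiguration graph consists of exactly n! components, each of size 2. -/

import Mathlib

/-- A proper list colouring. -/
def properL {V : Type*} (G : SimpleGraph V) (L : V → Finset ℕ) (c : V → ℕ) : Prop :=
  (∀ v, c v ∈ L v) ∧ ∀ ⦃u w⦄, G.Adj u w → c u ≠ c w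

/-- Vertex `v` is unfrozen under `c`. -/
def unfrozenAt {V : Type*} (G : SimpleGraph V) (L : V → Finset ℕ) (c : V → ℕ) (v : V) : Prop :=
  ∃ b ∈ L v, b ≠ c v ∧ ∀ u, G.Adj v u → c u ≠ b

/-- A single-vertex recolouring step between proper `L`-colourings. -/
def recolStep {V : Type*} (G : SimpleGraph V) (L : V → Finset ℕ) (c c' : V → ℕ) : Prop :=
  properL G L c ∧ properL G L c' ∧ ∃ x, c x ≠ c' x ∧ ∀ u, u ≠ x → c u = c' u

section Aux
variable (n : ℕ)

def G19 : SimpleGraph (Option (Fin n)) :=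
  SimpleGraph.fromRel (fun u v => (u.isSome ∧ v.isSome) ∨
    (u = none ∧ ∃ h : 0 < n, v = some ⟨0, h⟩))

def L19 (v : Option (Fin n)) : Finset ℕ :=
  v.elim {n + 1, n + 2} (fun _ => Finset.Icc 1 n)

variable {n}

lemma adj_some_some {a b : Fin n} : (G19 n).Adj (some a) (some b) ↔ a ≠ b := by
  simp [G19, SimpleGraph.fromRel_adj]

lemma adj_none (hn : 0 < n) {v : Option (Fin n)} :
    (G19 n).Adj none v ↔ v = some ⟨0, hn⟩ := by
  constructor
  · rintro ⟨hne, ⟨⟨h, _⟩ | ⟨_, _, rfl⟩⟩ | ⟨⟨_, h⟩ | ⟨h, _⟩⟩⟩ <;> simp_all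
  · rintro rfl
    exact ⟨by simp, Or.inl (Or.inr ⟨rfl, hn, rfl⟩)⟩

lemma proper_inj {c : Option (Fin n) → ℕ} (hc : properL (G19 n) (L19 n) c) :
    Function.Injective (fun a : Fin n => c (some a)) := by
  intro a b hab
  by_contra hne
  exact hc.2 (adj_some_some.2 hne) hab

lemma proper_surj {c : Option (Fin n) → ℕ} (hc : properL (G19 n) (L19 n) c)
    {y : ℕ} (hy : y ∈ Finset.Icc 1 n) : ∃ a : Fin n, c (some a) = y := by
  classical
  let g : Fin n → (Finset.Icc 1 n : Finset ℕ) := fun a => ⟨c (some a), hc.1 (some a)⟩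
  have hginj : Function.Injective g := by
    intro a b hab
    exact proper_inj hc (congrArg Subtype.val hab)
  have hcard : Fintype.card (Fin n) = Fintype.card (Finset.Icc 1 n : Finset ℕ) := by
    simp [Nat.card_Icc]
  have hbij : Function.Bijective g :=
    (Fintype.bijective_iff_injective_and_card g).2 ⟨hginj, hcard⟩
  obtain ⟨a, ha⟩ := hbij.2 ⟨y, hy⟩
  exact ⟨a, congrArg Subtype.val ha⟩

lemma step_inv {c c' : Option (Fin n) → ℕ}
    (h : recolStep (G19 n) (L19 n) c c') (a : Fin n) : c (some a) = c' (some a) := by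
  obtain ⟨hc, hc', x, hx, hrest⟩ := h
  match x with
  | none => exact hrest (some a) (by simp)
  | some b =>
    exfalso
    have hy : c' (some b) ∈ Finset.Icc 1 n := hc'.1 (some b)
    obtain ⟨d, hd⟩ := proper_surj hc hy
    have hdb : d ≠ b := by
      intro h'; subst h'; exact hx hd
    have : c' (some d) = c' (some b) := by
      rw [← hrest (some d) (by simpa using hdb), hd]
    exact hc'.2 (adj_some_some.2 hdb) this

lemma rtg_inv {c c' : Option (Fin n) → ℕ}
    (h : Relation.ReflTransGen (recolStep (G19 n) (L19 n)) c c') (a : Fin n) :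
    c (some a) = c' (some a) := by
  induction h with
  | refl => rfl
  | tail _ hstep ih => exact ih.trans (step_inv hstep a)

end Aux

/-- Shattering example: a connected graph on `n+1` vertices where one vertex `w`
has a list of size exactly `deg w` and all others a list of size at least
`deg v + 1`, whose recolouring graph has at least `n!` pairwise unreachable
unfrozen (hence non-singleton-component) proper list colourings. -/
theorem stmt19 (n : ℕ) (hn : 1 ≤ n) :
    ∃ (V : Type) (_ : Fintype V) (G : SimpleGraph V) (L : V → Finset ℕ) (w : V),
      G.Connected ∧ Fintype.card V = n + 1 ∧
      (L w).card = (G.neighborSet w).ncard ∧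
      (∀ v, v ≠ w → (G.neighborSet v).ncard + 1 ≤ (L v).card) ∧
      ∃ F : Fin (Nat.factorial n) → (V → ℕ),
        (∀ i, properL G L (F i)) ∧
        (∀ i, ∃ x, unfrozenAt G L (F i) x) ∧
        (∀ i j, i ≠ j → ¬ Relation.ReflTransGen (recolStep G L) (F i) (F j)) := by
  classical
  have hn0 : 0 < n := hn
  set z : Fin n := ⟨0, hn0⟩ with hz
  refine ⟨Option (Fin n), inferInstance, G19 n, L19 n, some z, ?_, ?_, ?_, ?_, ?_⟩
  · -- connected
    haveI : Nonempty (Option (Fin n)) := ⟨none⟩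
    refine SimpleGraph.Connected.mk fun u v => ?_
    have key : ∀ u : Option (Fin n), (G19 n).Reachable u (some z) := by
      intro u
      match u with
      | none => exact ((adj_none hn0).2 rfl).reachable
      | some a =>
        by_cases ha : a = z
        · subst ha; rfl
        · exact (adj_some_some.2 ha).reachable
    exact (key u).trans (key v).symm
  · simp
  · -- list card at w
    have hns : (G19 n).neighborSet (some z) = {some z}ᶜ := by
      ext v
      match v with
      | none =>
        simp only [SimpleGraph.mem_neighborSet, Set.mem_compl_iff, Set.mem_singleton_iff]
        constructor
        · intro _; simp
        · intro _; exact ((adj_none hn0).2 rfl).symm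
      | some b =>
        simp only [SimpleGraph.mem_neighborSet, Set.mem_compl_iff, Set.mem_singleton_iff]
        rw [SimpleGraph.adj_comm, adj_some_some]
        constructor
        · intro h h'
          exact h (Option.some_injective _ h')
        · intro h h'; exact h (by rw [h'])
    rw [hns]
    have h1 := Set.ncard_add_ncard_compl ({some z} : Set (Option (Fin n)))
    rw [Set.ncard_singleton] at h1
    have h2 : ({some z}ᶜ : Set (Option (Fin n))).ncard = n := by
      have : Nat.card (Option (Fin n)) = n + 1 := by simp
      omega
    rw [h2]
    simp only [L19, Option.elim]
    rw [Nat.card_Icc]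
    omega
  · -- other vertices
    intro v hv
    match v with
    | none =>
      have : (G19 n).neighborSet none = {some z} := by
        ext u
        simp [SimpleGraph.mem_neighborSet, adj_none hn0, hz]
      rw [this, Set.ncard_singleton]
      simp [L19]
    | some a =>
      have haz : a ≠ z := fun h => hv (by rw [h])
      have : (G19 n).neighborSet (some a) = some '' ({a}ᶜ) := by
        ext u
        match u with
        | none =>
          simp only [SimpleGraph.mem_neighborSet, Set.mem_image]
          rw [SimpleGraph.adj_comm, adj_none hn0]
          constructor
          · intro h; exact absurd (Option.some_injective _ h) haz
          · rintro ⟨b, _, h⟩; simp at h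
        | some b =>
          simp only [SimpleGraph.mem_neighborSet, Set.mem_image, Set.mem_compl_iff,
            Set.mem_singleton_iff]
          rw [adj_some_some]
          constructor
          · intro h; exact ⟨b, fun h' => h h'.symm, rfl⟩
          · rintro ⟨c, hc, h⟩; injection h with h; subst h; exact fun h' => hc h'.symm
      rw [this, Set.ncard_image_of_injective _ (Option.some_injective _)]
      have h1 := Set.ncard_add_ncard_compl ({a} : Set (Fin n))
      rw [Set.ncard_singleton] at h1
      have h2 : Nat.card (Fin n) = n := by simp
      simp only [L19, Option.elim]
      rw [Nat.card_Icc]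
      omega
  · -- colourings
    have hcard : Fintype.card (Equiv.Perm (Fin n)) = Nat.factorial n := by
      simp [Fintype.card_perm]
    let e : Equiv.Perm (Fin n) ≃ Fin (Nat.factorial n) := Fintype.equivFinOfCardEq hcard
    let σ : Fin (Nat.factorial n) → Equiv.Perm (Fin n) := e.symm
    have hσinj : Function.Injective σ := e.symm.injective
    refine ⟨fun i v => v.elim (n + 1) (fun a => (σ i a : ℕ) + 1), ?_, ?_, ?_⟩
    · intro i
      constructor
      · intro v
        match v with
        | none => simp [L19]
        | some a =>
          simp only [L19, Option.elim, Finset.mem_Icc]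
          exact ⟨by omega, (σ i a).isLt⟩
      · intro u v huv
        match u, v with
        | none, none => exact absurd rfl huv.ne
        | none, some b => simp only [Option.elim]; have := (σ i b).isLt; omega
        | some a, none => simp only [Option.elim]; have := (σ i a).isLt; omega
        | some a, some b =>
          have hab : a ≠ b := by
            intro h; exact huv.ne (by rw [h])
          simp only [Option.elim]
          intro h
          exact hab (σ i |>.injective (Fin.val_injective (by omega)))
    · intro i
      refine ⟨none, n + 2, by simp [L19], by simp, ?_⟩
      intro u hu
      rw [adj_none hn0] at hu
      subst hu
      simp only [Option.elim]
      have := (σ i z).isLt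
      omega
    · intro i j hij hreach
      have hσ : σ i ≠ σ j := fun h => hij (hσinj h)
      obtain ⟨a, ha⟩ : ∃ a, σ i a ≠ σ j a := by
        by_contra h
        push_neg at h
        exact hσ (Equiv.ext h)
      have := rtg_inv hreach a
      simp only [Option.elim] at this
      exact ha (Fin.val_injective (by omega))
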